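/- Let M₁, ..., Mₙ ∈ UT_d(ℤ) with n ≥ 2d, and let m = max{|Mᵢ| : 1 ≤ i ≤ n}, where |M| denotes the sum of absolute values of all entries of M. Then |M₁M₂⋯Mₙ| ≤ d + (d-1)·C(n, d-1)·d^(2(d-2))·m^(d-1). -/

import Mathlib

namespace UTBound

variable {d : ℕ}

def nrm (A : Matrix (Fin d) (Fin d) ℤ) : ℕ := ∑ i, ∑ j, (A i j).natAbs

lemma natAbs_sum_le' {α : Type*} (s : Finset α) (f : α → ℤ) :
    (∑ i ∈ s, f i).natAbs ≤ ∑ i ∈ s, (f i).natAbs := by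
  classical
  induction s using Finset.induction with
  | empty => simp
  | @insert a s h ih =>
    rw [Finset.sum_insert h, Finset.sum_insert h]
    exact le_trans (Int.natAbs_add_le _ _) (by omega)

lemma nrm_sum_le {α : Type*} (s : Finset α) (f : α → Matrix (Fin d) (Fin d) ℤ) :
    nrm (∑ t ∈ s, f t) ≤ ∑ t ∈ s, nrm (f t) := by
  unfold nrm
  calc ∑ i, ∑ j, ((∑ t ∈ s, f t) i j).natAbs
      ≤ ∑ i, ∑ j, ∑ t ∈ s, ((f t) i j).natAbs := by
        refine Finset.sum_le_sum fun i _ => Finset.sum_le_sum fun j _ => ?_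
        simp only [Matrix.sum_apply]
        exact natAbs_sum_le' _ _
    _ = ∑ t ∈ s, ∑ i, ∑ j, ((f t) i j).natAbs := by
        rw [show (∑ i, ∑ j, ∑ t ∈ s, ((f t) i j).natAbs) = ∑ i, ∑ t ∈ s, ∑ j, ((f t) i j).natAbs from Finset.sum_congr rfl fun i _ => Finset.sum_comm]
        exact Finset.sum_comm

lemma nrm_add_le (A B : Matrix (Fin d) (Fin d) ℤ) : nrm (A + B) ≤ nrm A + nrm B := by
  unfold nrm
  rw [← Finset.sum_add_distrib]
  refine Finset.sum_le_sum fun i _ => ?_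
  rw [← Finset.sum_add_distrib]
  refine Finset.sum_le_sum fun j _ => ?_
  exact Int.natAbs_add_le _ _

lemma nrm_one : nrm (1 : Matrix (Fin d) (Fin d) ℤ) = d := by
  unfold nrm
  simp [Matrix.one_apply, apply_ite Int.natAbs, Finset.sum_ite_eq]

lemma nrm_mul_le (A B : Matrix (Fin d) (Fin d) ℤ) : nrm (A * B) ≤ nrm A * nrm B := by
  unfold nrm
  calc ∑ i, ∑ j, ((A * B) i j).natAbs
      ≤ ∑ i, ∑ j, ∑ k, (A i k).natAbs * (B k j).natAbs := by
        refine Finset.sum_le_sum fun i _ => Finset.sum_le_sum fun j _ => ?_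
        rw [Matrix.mul_apply]
        refine le_trans (natAbs_sum_le' _ _) ?_
        refine Finset.sum_le_sum fun k _ => ?_
        rw [Int.natAbs_mul]
    _ = ∑ i, ∑ k, (A i k).natAbs * ∑ j, (B k j).natAbs := by
        refine Finset.sum_congr rfl fun i _ => ?_
        rw [Finset.sum_comm]
        exact Finset.sum_congr rfl fun k _ => (Finset.mul_sum _ _ _).symm
    _ ≤ ∑ i, ∑ k, (A i k).natAbs * ∑ k', ∑ j, (B k' j).natAbs := by
        refine Finset.sum_le_sum fun i _ => Finset.sum_le_sum fun k _ => ?_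
        exact Nat.mul_le_mul_left _ (Finset.single_le_sum (f := fun k' => ∑ j, (B k' j).natAbs) (fun k' _ => Nat.zero_le _) (Finset.mem_univ k))
    _ = (∑ i, ∑ k, (A i k).natAbs) * ∑ k', ∑ j, (B k' j).natAbs := by
        rw [Finset.sum_mul]
        exact Finset.sum_congr rfl fun i _ => (Finset.sum_mul _ _ _).symm



/-- sum over sublists of length t of the ordered products -/
def utP (d : ℕ) : List (Matrix (Fin d) (Fin d) ℤ) → ℕ → Matrix (Fin d) (Fin d) ℤ
  | _, 0 => 1
  | [], _+1 => 0
  | a :: l, t+1 => utP d l (t+1) + a * utP d l t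

lemma utP_length_lt : ∀ (l : List (Matrix (Fin d) (Fin d) ℤ)) (t : ℕ), l.length < t → utP d l t = 0
  | _, 0, h => by omega
  | [], t+1, _ => rfl
  | a :: l, t+1, h => by
    have h1 : l.length < t + 1 := by simp at h; omega
    have h2 : l.length < t := by simp at h; omega
    rw [utP, utP_length_lt l (t+1) h1, utP_length_lt l t h2, mul_zero, add_zero]

/-- strict triangularity of utP -/
lemma utP_triangular : ∀ (l : List (Matrix (Fin d) (Fin d) ℤ)),
    (∀ a ∈ l, ∀ i j : Fin d, (j : ℕ) < (i : ℕ) + 1 → a i j = 0) →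
    ∀ (t : ℕ) (i j : Fin d), (j : ℕ) < (i : ℕ) + t → utP d l t i j = 0
  | l, hl, 0, i, j, hij => by
    have : j ≠ i := by intro h; subst h; omega
    simpa [utP, Matrix.one_apply] using fun h => absurd h.symm (by intro h; apply this; exact h)
  | [], _, t+1, i, j, hij => rfl
  | a :: l, hl, t+1, i, j, hij => by
    have hl' : ∀ b ∈ l, ∀ i j : Fin d, (j : ℕ) < (i : ℕ) + 1 → b i j = 0 :=
      fun b hb => hl b (List.mem_cons_of_mem a hb)
    rw [utP, Matrix.add_apply, utP_triangular l hl' (t+1) i j hij, Matrix.mul_apply]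
    rw [zero_add]
    refine Finset.sum_eq_zero fun k _ => ?_
    by_cases hk : (k : ℕ) < (i : ℕ) + 1
    · rw [hl a List.mem_cons_self i k hk, zero_mul]
    · rw [utP_triangular l hl' t k j (by omega), mul_zero]

lemma utP_nrm_le (m : ℕ) : ∀ (l : List (Matrix (Fin d) (Fin d) ℤ)),
    (∀ a ∈ l, nrm a ≤ m) → ∀ t : ℕ, nrm (utP d l (t+1)) ≤ Nat.choose l.length (t+1) * m ^ (t+1)
  | [], _, t => by simp [utP, nrm]
  | a :: l, hl, t => by
    have hl' : ∀ b ∈ l, nrm b ≤ m := fun b hb => hl b (List.mem_cons_of_mem a hb)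
    have ha : nrm a ≤ m := hl a List.mem_cons_self
    have key : nrm (a * utP d l t) ≤ Nat.choose l.length t * m ^ (t+1) := by
      cases t with
      | zero => simpa [utP, pow_one] using ha
      | succ s =>
        calc nrm (a * utP d l (s+1)) ≤ nrm a * nrm (utP d l (s+1)) := nrm_mul_le _ _
          _ ≤ m * (Nat.choose l.length (s+1) * m ^ (s+1)) :=
              Nat.mul_le_mul ha (utP_nrm_le m l hl' s)
          _ = Nat.choose l.length (s+1) * m ^ (s+2) := by ring
    calc nrm (utP d (a :: l) (t+1)) ≤ nrm (utP d l (t+1)) + nrm (a * utP d l t) := nrm_add_le _ _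
      _ ≤ Nat.choose l.length (t+1) * m ^ (t+1) + Nat.choose l.length t * m ^ (t+1) :=
          Nat.add_le_add (utP_nrm_le m l hl' t) key
      _ = Nat.choose (l.length + 1) (t+1) * m ^ (t+1) := by
          rw [Nat.choose_succ_succ, Nat.add_mul]
          exact Nat.add_comm _ _
      _ = Nat.choose (a :: l).length (t+1) * m ^ (t+1) := by simp

lemma prod_eq_sum_utP : ∀ (l : List (Matrix (Fin d) (Fin d) ℤ)),
    (l.map (fun N => 1 + N)).prod = ∑ t ∈ Finset.range (l.length + 1), utP d l t
  | [] => by simp [utP]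
  | a :: l => by
    rw [List.map_cons, List.prod_cons, prod_eq_sum_utP l, add_mul, one_mul,
      Finset.mul_sum]
    have h1 : ∑ t ∈ Finset.range ((a :: l).length + 1), utP d (a :: l) t
        = (∑ t ∈ Finset.range (l.length + 1), utP d (a :: l) (t+1)) + utP d (a :: l) 0 :=
      Finset.sum_range_succ' _ _
    rw [h1]
    have h2 : ∀ t ∈ Finset.range (l.length + 1), utP d (a :: l) (t + 1)
        = utP d l (t+1) + a * utP d l t := fun t _ => rfl
    rw [Finset.sum_congr rfl h2, Finset.sum_add_distrib]
    have h3 : (∑ t ∈ Finset.range (l.length + 1), utP d l (t+1)) + utP d l 0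
        = ∑ t ∈ Finset.range (l.length + 2), utP d l t := (Finset.sum_range_succ' _ _).symm
    have h4 : ∑ t ∈ Finset.range (l.length + 2), utP d l t
        = (∑ t ∈ Finset.range (l.length + 1), utP d l t) + utP d l (l.length + 1) :=
      Finset.sum_range_succ _ _
    have h0 : utP d (a :: l) 0 = utP d l 0 := by rw [utP, utP]
    rw [utP_length_lt l (l.length + 1) (by omega), add_zero] at h4
    have h5 : (∑ t ∈ Finset.range (l.length + 1), utP d l (t+1)) + utP d l 0
        = ∑ t ∈ Finset.range (l.length + 1), utP d l t := by rw [h3, h4]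
    rw [h0]
    conv_rhs => rw [add_right_comm]
    rw [h5]
lemma choose_mono_left {n a b : ℕ} (hab : a ≤ b) (hb : b ≤ n / 2) :
    Nat.choose n a ≤ Nat.choose n b := by
  induction b, hab using Nat.le_induction with
  | base => exact le_refl _
  | succ b hab ih =>
    exact (ih (by omega)).trans (Nat.choose_le_succ_of_lt_half_left (by omega))

end UTBound

/-- Bound on the entries of a product of unitriangular integer matrices. -/
theorem prod_unitriangular_norm_bound (d n : ℕ) (hn : 2 * d ≤ n)
    (M : Fin n → Matrix (Fin d) (Fin d) ℤ)
    (huni : ∀ k : Fin n, (∀ i j : Fin d, j < i → M k i j = 0) ∧ ∀ i : Fin d, M k i i = 1) :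
    ∑ i : Fin d, ∑ j : Fin d, (((List.ofFn M).prod) i j).natAbs ≤
      d + (d - 1) * Nat.choose n (d - 1) * d ^ (2 * (d - 2)) *
        (Finset.univ.sup fun k : Fin n => ∑ i : Fin d, ∑ j : Fin d, (M k i j).natAbs) ^ (d - 1) := by
  classical
  open UTBound in
  set m := Finset.univ.sup fun k : Fin n => ∑ i : Fin d, ∑ j : Fin d, (M k i j).natAbs with hm
  set N : Fin n → Matrix (Fin d) (Fin d) ℤ := fun k => M k - 1 with hN
  have hlist : List.ofFn M = (List.ofFn N).map (fun X => 1 + X) := by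
    rw [List.map_ofFn]
    exact congrArg List.ofFn (funext fun k => by simp [hN, Function.comp])
  set l := List.ofFn N with hldef
  have hlen : l.length = n := List.length_ofFn
  -- strict triangularity of the N k
  have hNtri : ∀ k : Fin n, ∀ i j : Fin d, (j : ℕ) < (i : ℕ) + 1 → N k i j = 0 := by
    intro k i j hij
    rcases eq_or_lt_of_le (Nat.lt_succ_iff.mp hij) with h | h
    · have : j = i := Fin.ext h
      subst this
      simp [hN, (huni k).2 j]
    · have hne : i ≠ j := by intro h'; subst h'; omega
      have : M k i j = 0 := (huni k).1 i j h
      simp [hN, this, Matrix.one_apply_ne hne]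
  have hltri : ∀ a ∈ l, ∀ i j : Fin d, (j : ℕ) < (i : ℕ) + 1 → a i j = 0 := by
    intro a ha
    rw [hldef, List.mem_ofFn] at ha
    obtain ⟨k, rfl⟩ := ha
    exact hNtri k
  -- norms of the N k
  have hMnrm : ∀ k : Fin n, nrm (M k) ≤ m := fun k =>
    Finset.le_sup (f := fun k : Fin n => ∑ i : Fin d, ∑ j : Fin d, (M k i j).natAbs)
      (Finset.mem_univ k)
  have hNnrm : ∀ a ∈ l, nrm a ≤ m := by
    intro a ha
    rw [hldef, List.mem_ofFn] at ha
    obtain ⟨k, rfl⟩ := ha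
    refine le_trans ?_ (hMnrm k)
    refine Finset.sum_le_sum fun i _ => Finset.sum_le_sum fun j _ => ?_
    by_cases hij : (j : ℕ) < (i : ℕ) + 1
    · rw [hNtri k i j hij]; exact Nat.zero_le _
    · have hne : i ≠ j := by intro h'; subst h'; omega
      have : N k i j = M k i j := by simp [hN, Matrix.one_apply_ne hne]
      rw [this]
  -- the main estimate
  have main : nrm ((List.ofFn M).prod) ≤
      d + (d - 1) * Nat.choose n (d - 1) * m ^ (d - 1) := by
    rw [hlist, prod_eq_sum_utP, hlen]
    have hterm : ∀ t ∈ Finset.range n, nrm (utP d l (t + 1)) ≤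
        if t + 1 ≤ d - 1 then Nat.choose n (d - 1) * m ^ (d - 1) else 0 := by
      intro t _
      by_cases h : t + 1 ≤ d - 1
      · rw [if_pos h]
        have hd2 : 2 ≤ d := by omega
        have hm1 : 1 ≤ m := by
          have hn0 : 0 < n := by omega
          have hk := hMnrm ⟨0, hn0⟩
          have hdle : d ≤ nrm (M ⟨0, hn0⟩) := by
            have h1 : ∑ i : Fin d, (M ⟨0, hn0⟩ i i).natAbs ≤ nrm (M ⟨0, hn0⟩) := by
              refine Finset.sum_le_sum fun i _ => ?_
              exact Finset.single_le_sum (f := fun j => (M ⟨0, hn0⟩ i j).natAbs)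
                (fun j _ => Nat.zero_le _) (Finset.mem_univ i)
            have h2 : ∑ i : Fin d, (M ⟨0, hn0⟩ i i).natAbs = d := by
              simp [(huni ⟨0, hn0⟩).2]
            omega
          omega
        calc nrm (utP d l (t + 1)) ≤ Nat.choose l.length (t + 1) * m ^ (t + 1) :=
              utP_nrm_le m l hNnrm t
          _ = Nat.choose n (t + 1) * m ^ (t + 1) := by rw [hlen]
          _ ≤ Nat.choose n (d - 1) * m ^ (d - 1) :=
              Nat.mul_le_mul (choose_mono_left h (by omega)) (Nat.pow_le_pow_right hm1 h)
      · rw [if_neg h]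
        have : utP d l (t + 1) = 0 := by
          ext i j
          rw [utP_triangular l hltri (t + 1) i j (by omega)]
          rfl
        simp [this, nrm]
    calc nrm (∑ t ∈ Finset.range (n + 1), utP d l t)
        ≤ ∑ t ∈ Finset.range (n + 1), nrm (utP d l t) := nrm_sum_le _ _
      _ = (∑ t ∈ Finset.range n, nrm (utP d l (t + 1))) + nrm (utP d l 0) :=
          Finset.sum_range_succ' _ _
      _ = (∑ t ∈ Finset.range n, nrm (utP d l (t + 1))) + d := by
          rw [show utP d l 0 = 1 by cases l <;> rfl, nrm_one]
      _ ≤ (∑ t ∈ Finset.range n,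
            if t + 1 ≤ d - 1 then Nat.choose n (d - 1) * m ^ (d - 1) else 0) + d :=
          Nat.add_le_add_right (Finset.sum_le_sum hterm) d
      _ ≤ (d - 1) * Nat.choose n (d - 1) * m ^ (d - 1) + d := by
          rw [← Finset.sum_filter]
          refine Nat.add_le_add_right ?_ d
          rw [Finset.sum_const, smul_eq_mul, Nat.mul_assoc]
          refine Nat.mul_le_mul_right _ ?_
          calc ((Finset.range n).filter (fun t => t + 1 ≤ d - 1)).card
              ≤ (Finset.range (d - 1)).card := by
                refine Finset.card_le_card fun t ht => ?_
                simp only [Finset.mem_filter, Finset.mem_range] at ht ⊢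
                omega
            _ = d - 1 := Finset.card_range _
      _ = d + (d - 1) * Nat.choose n (d - 1) * m ^ (d - 1) := Nat.add_comm _ _
  refine le_trans main ?_
  refine Nat.add_le_add_left ?_ d
  have hpow : 1 ≤ d ^ (2 * (d - 2)) := by
    rcases d with _ | d
    · simp
    · exact Nat.one_le_pow _ _ (Nat.succ_pos d)
  calc (d - 1) * Nat.choose n (d - 1) * m ^ (d - 1)
      ≤ (d - 1) * Nat.choose n (d - 1) * d ^ (2 * (d - 2)) * m ^ (d - 1) := by
        refine Nat.mul_le_mul_right _ ?_
        calc (d - 1) * Nat.choose n (d - 1)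
            = (d - 1) * Nat.choose n (d - 1) * 1 := (Nat.mul_one _).symm
          _ ≤ (d - 1) * Nat.choose n (d - 1) * d ^ (2 * (d - 2)) :=
              Nat.mul_le_mul_left _ hpow
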